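/- Let n ≥ 2, let 0 ≤ a, b ≤ n−1, and let i_1, …, i_a ∈ {1,…,n−1} with i_1 < i_2 < ⋯ < i_a. Set γ = σ_{i_a} ⋯ σ_{i_2} σ_{i_1} σ_1 σ_2 ⋯ σ_b ∈ B_n^+. Then tr_n^0(γ) lies in ℤ[q,z], and its evaluation at z = 0 equals q^a if a = b and i_j = j for all 1 ≤ j ≤ a, and equals 0 otherwise. -/

import Mathlib

noncomputable section
open scoped Classical

/-- `𝕂 = ℂ(q)`. -/
abbrev K : Type := RatFunc ℂ
/-- `𝕂(z)`. -/
abbrev Kz : Type := RatFunc K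
/-- the variable `q`. -/
def q : K := RatFunc.X
/-- the variable `z`. -/
def z : Kz := RatFunc.X

/-- The braid relations, as elements of the free group on `σ_1, …, σ_{n-1}`
(0-indexed `i ↔ σ_{i+1}`). -/
def braidRels (n : ℕ) : Set (FreeGroup (Fin (n - 1))) :=
  {r | (∃ i j : Fin (n - 1), ((i : ℕ) + 1 = (j : ℕ) ∨ (j : ℕ) + 1 = (i : ℕ)) ∧
          r = FreeGroup.of i * FreeGroup.of j * FreeGroup.of i *
              (FreeGroup.of j * FreeGroup.of i * FreeGroup.of j)⁻¹) ∨
       (∃ i j : Fin (n - 1), ((i : ℕ) + 2 ≤ (j : ℕ) ∨ (j : ℕ) + 2 ≤ (i : ℕ)) ∧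
          r = FreeGroup.of i * FreeGroup.of j * (FreeGroup.of j * FreeGroup.of i)⁻¹)}

/-- The braid group `B_n` on `n` strands. -/
def BG (n : ℕ) : Type := PresentedGroup (braidRels n)

instance (n : ℕ) : Group (BG n) := inferInstanceAs (Group (PresentedGroup _))

/-- The standard generator `σ_{i+1}` of the braid group. -/
def bgen {n : ℕ} (i : Fin (n - 1)) : BG n := PresentedGroup.of i

lemma bgen_braid {m : ℕ} (i j : Fin (m - 1)) (h : (i : ℕ) + 1 = (j : ℕ) ∨ (j : ℕ) + 1 = (i : ℕ)) :
    bgen (n := m) i * bgen j * bgen i = bgen j * bgen i * bgen j := by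
  have key : PresentedGroup.mk (braidRels m)
      (FreeGroup.of i * FreeGroup.of j * FreeGroup.of i *
        (FreeGroup.of j * FreeGroup.of i * FreeGroup.of j)⁻¹) = 1 :=
    (QuotientGroup.eq_one_iff _).mpr (Subgroup.subset_normalClosure (Or.inl ⟨i, j, h, rfl⟩))
  rw [map_mul, map_inv, mul_inv_eq_one] at key
  exact key

lemma bgen_comm {m : ℕ} (i j : Fin (m - 1)) (h : (i : ℕ) + 2 ≤ (j : ℕ) ∨ (j : ℕ) + 2 ≤ (i : ℕ)) :
    bgen (n := m) i * bgen j = bgen j * bgen i := by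
  have key : PresentedGroup.mk (braidRels m)
      (FreeGroup.of i * FreeGroup.of j * (FreeGroup.of j * FreeGroup.of i)⁻¹) = 1 :=
    (QuotientGroup.eq_one_iff _).mpr (Subgroup.subset_normalClosure (Or.inr ⟨i, j, h, rfl⟩))
  rw [map_mul, map_inv, mul_inv_eq_one] at key
  exact key

/-- The standard inclusion `B_n → B_{n+1}`. -/
def inclB {n : ℕ} : BG n →* BG (n + 1) :=
  PresentedGroup.toGroup (f := fun i : Fin (n - 1) => bgen (Fin.castLE (by omega) i))
    (by
      rintro r (⟨i, j, hij, rfl⟩ | ⟨i, j, hij, rfl⟩) <;>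
        simp only [map_mul, map_inv, FreeGroup.lift_apply_of, mul_inv_eq_one]
      · exact bgen_braid _ _ (by simpa using hij)
      · exact bgen_comm _ _ (by simpa using hij))

/-- The positive braid monoid `B_n⁺`, the submonoid of `B_n` generated by the `σ_i`. -/
def Bplus (n : ℕ) : Submonoid (BG n) := Submonoid.closure (Set.range (bgen (n := n)))

/-- The monoid algebra `𝕂[B_n]`. -/
abbrev MAB (n : ℕ) : Type := MonoidAlgebra K (BG n)

/-- The Hecke relations `σ_k² = (q-1)σ_k + q`. -/
def hrelB (n : ℕ) : MAB n → MAB n → Prop := fun x y =>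
  ∃ i : Fin (n - 1), x = (MonoidAlgebra.of K (BG n) (bgen i)) ^ 2 ∧
    y = (q - 1) • MonoidAlgebra.of K (BG n) (bgen i) + q • 1

/-- The Hecke algebra `H(B_n)` of the braid group / symmetric group. -/
def HB (n : ℕ) : Type := RingQuot (hrelB n)

instance (n : ℕ) : Ring (HB n) := inferInstanceAs (Ring (RingQuot (hrelB n)))
instance (n : ℕ) : Algebra K (HB n) := inferInstanceAs (Algebra K (RingQuot (hrelB n)))

/-- The natural map `B_n → H(B_n)`. -/
def ιHB {n : ℕ} (β : BG n) : HB n := RingQuot.mkAlgHom K (hrelB n) (MonoidAlgebra.of K (BG n) β)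

/-- The generator `σ_n` of `B_{n+2}` (0-indexed `n`), used in the Markov condition. -/
def lastGenB (n : ℕ) : Fin ((n + 2) - 1) := ⟨n, by omega⟩

/-- A collection of 𝕂-linear maps `H(B_n) → 𝕂(z)`, `n ≥ 1`
(index `n` in the collection corresponds to `n+1` strands). -/
abbrev TRBc : Type := ∀ n : ℕ, HB (n + 1) →ₗ[K] Kz

/-- The Markov trace conditions for the tower of Hecke algebras `{H(B_n)}ₙ`. -/
def IsMarkovB (T : TRBc) : Prop :=
  (∀ (n : ℕ) (α β : BG (n + 1)), T n (ιHB (α * β)) = T n (ιHB (β * α))) ∧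
  (∀ (n : ℕ) (β : BG (n + 1)), T (n + 1) (ιHB (inclB β)) = T n (ιHB β)) ∧
  (∀ (n : ℕ) (β : BG (n + 1)),
    T (n + 1) (ιHB (inclB β * bgen (lastGenB n))) = z * T n (ιHB β))

/-- The subring `ℤ[q] ⊆ 𝕂`. -/
def Zq : Subring K := Subring.closure {q}

/-- The subring `ℤ[q, z] ⊆ 𝕂(z)`. -/
def Rqz : Subring Kz := Subring.closure {algebraMap K Kz q, z}

/-- Evaluation at `z = 0` of a rational function in `z`. -/
def evalz0 : Kz → K := RatFunc.eval (RingHom.id K) 0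

namespace S19

lemma iota_mul {n : ℕ} (α β : BG n) : ιHB (α * β) = ιHB α * ιHB β := by
  unfold ιHB; rw [map_mul, map_mul]; rfl

lemma iota_one {n : ℕ} : ιHB (1 : BG n) = 1 := by
  unfold ιHB; rw [map_one, map_one]; rfl

/-- product of generators indexed by a list of naturals (out-of-range ↦ 1) -/
def gp (n : ℕ) (L : List ℕ) : BG n :=
  (L.map fun i => if h : i < n - 1 then bgen ⟨i, h⟩ else 1).prod

lemma gp_nil (n : ℕ) : gp n [] = 1 := rfl

lemma gp_append (n : ℕ) (L1 L2 : List ℕ) : gp n (L1 ++ L2) = gp n L1 * gp n L2 := by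
  unfold gp; rw [List.map_append, List.prod_append]

lemma gp_cons (n : ℕ) (i : ℕ) (L : List ℕ) :
    gp n (i :: L) = (if h : i < n - 1 then bgen ⟨i, h⟩ else 1) * gp n L := by
  unfold gp; rw [List.map_cons, List.prod_cons]

lemma gp_singleton (n i : ℕ) (h : i < n - 1) : gp n [i] = bgen ⟨i, h⟩ := by
  rw [gp_cons, gp_nil, dif_pos h, mul_one]

lemma inclB_bgen {n : ℕ} (i : Fin (n - 1)) :
    inclB (bgen i) = bgen (Fin.castLE (by omega) i) :=
  PresentedGroup.toGroup.of _

lemma inclB_gp (n : ℕ) (L : List ℕ) (h : ∀ i ∈ L, i < n) :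
    inclB (gp (n + 1) L) = gp (n + 2) L := by
  induction L with
  | nil => rw [gp_nil, gp_nil, map_one]
  | cons i L ih =>
    have hi : i < n := h i List.mem_cons_self
    rw [gp_cons, gp_cons, map_mul, ih (fun j hj => h j (List.mem_cons_of_mem _ hj)),
      dif_pos (show i < (n + 1) - 1 from hi), dif_pos (show i < (n + 2) - 1 by omega),
      inclB_bgen]
    rfl

variable (T : TRBc)

/-- the trace of the word `L` at level `n` (i.e. in `B_{n+1}`). -/
def Tr (n : ℕ) (L : List ℕ) : Kz := T n (ιHB (gp (n + 1) L))

variable {T}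

lemma Tr_nil (hT : IsMarkovB T) (hnorm : T 0 1 = 1) (n : ℕ) : Tr T n [] = 1 := by
  induction n with
  | zero => show T 0 (ιHB (gp 1 [])) = 1; rw [gp_nil, iota_one, hnorm]
  | succ n ih =>
    show T (n + 1) (ιHB (gp (n + 2) [])) = 1
    rw [← inclB_gp n [] (by simp), hT.2.1 n]
    exact ih

lemma Tr_step (hT : IsMarkovB T) {n : ℕ} {L : List ℕ} (h : ∀ i ∈ L, i < n) :
    Tr T (n + 1) L = Tr T n L := by
  show T (n + 1) (ιHB (gp (n + 2) L)) = _
  rw [← inclB_gp n L h]; exact hT.2.1 n _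

lemma Tr_stab (hT : IsMarkovB T) {k n : ℕ} {L : List ℕ} (hkn : k ≤ n) (h : ∀ i ∈ L, i < k) :
    Tr T n L = Tr T k L := by
  induction n with
  | zero =>
    obtain rfl : k = 0 := Nat.le_zero.mp hkn
    rfl
  | succ n ih =>
    rcases Nat.eq_or_lt_of_le hkn with h1 | h1
    · rw [h1]
    · rw [Tr_step hT (fun i hi => lt_of_lt_of_le (h i hi) (by omega))]
      exact ih (by omega)

lemma Tr_markov (hT : IsMarkovB T) {n : ℕ} {L : List ℕ} (h : ∀ i ∈ L, i < n) :
    Tr T (n + 1) (L ++ [n]) = z * Tr T n L := by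
  show T (n + 1) (ιHB (gp (n + 2) (L ++ [n]))) = _
  rw [gp_append, gp_singleton (n + 2) n (by omega), ← inclB_gp n L h]
  exact hT.2.2 n _

lemma Tr_cyc (hT : IsMarkovB T) (n : ℕ) (L1 L2 : List ℕ) :
    Tr T n (L1 ++ L2) = Tr T n (L2 ++ L1) := by
  show T n (ιHB (gp (n + 1) (L1 ++ L2))) = T n (ιHB (gp (n + 1) (L2 ++ L1)))
  rw [gp_append, gp_append]; exact hT.1 n _ _

lemma sq_rel {n : ℕ} (i : Fin (n - 1)) :
    ιHB (bgen i) * ιHB (bgen i) = (q - 1) • ιHB (bgen i) + q • (1 : HB n) := by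
  have h := RingQuot.mkAlgHom_rel K (s := hrelB n)
    (x := (MonoidAlgebra.of K (BG n) (bgen i)) ^ 2)
    (y := (q - 1) • MonoidAlgebra.of K (BG n) (bgen i) + q • 1) ⟨i, rfl, rfl⟩
  rw [map_pow, map_add, map_smul, map_smul, map_one, pow_two] at h
  exact h

lemma Tr_hecke (hT : IsMarkovB T) {n : ℕ} (L : List ℕ) {i : ℕ} (h : i < n) :
    Tr T n (L ++ [i, i]) = (q - 1) • Tr T n (L ++ [i]) + q • Tr T n L := by
  have hb : i < (n + 1) - 1 := by omega
  show T n (ιHB (gp (n + 1) (L ++ [i, i]))) = _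
  have e : gp (n + 1) (L ++ [i, i]) = gp (n + 1) L * (bgen ⟨i, hb⟩ * bgen ⟨i, hb⟩) := by
    rw [gp_append, gp_cons, gp_cons, gp_nil, dif_pos hb, mul_one]
  rw [e, iota_mul, iota_mul, sq_rel, mul_add, mul_smul_comm, mul_smul_comm, mul_one,
    ← iota_mul, map_add, map_smul, map_smul]
  have e2 : gp (n + 1) (L ++ [i]) = gp (n + 1) L * bgen ⟨i, hb⟩ := by
    rw [gp_append, gp_singleton _ _ hb]
  rw [← e2]
  rfl

/-- `x` is represented by a polynomial with coefficients in `ℤ[q]`,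
whose value at `z = 0` is `t`. -/
def P (x : Kz) (t : K) : Prop :=
  ∃ p : Polynomial K, (∀ i, p.coeff i ∈ Zq) ∧
    x = algebraMap (Polynomial K) Kz p ∧ p.eval 0 = t

lemma P_one : P 1 1 := by
  refine ⟨1, fun i => ?_, by rw [map_one], by rw [Polynomial.eval_one]⟩
  rcases Nat.eq_zero_or_pos i with h | h
  · rw [h]; simpa using Subring.one_mem Zq
  · rw [Polynomial.coeff_one, if_neg (by omega)]; exact Subring.zero_mem Zq

lemma P_z_mul {x : Kz} {t : K} (hx : P x t) : P (z * x) 0 := by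
  obtain ⟨p, hp, hx, _⟩ := hx
  refine ⟨Polynomial.X * p, fun i => ?_, ?_, ?_⟩
  · cases i with
    | zero =>
      rw [Polynomial.mul_coeff_zero, Polynomial.coeff_X_zero, zero_mul]
      exact Subring.zero_mem Zq
    | succ i => rw [Polynomial.coeff_X_mul]; exact hp i
  · rw [map_mul, hx, z, RatFunc.algebraMap_X]
  · rw [Polynomial.eval_mul, Polynomial.eval_X, zero_mul]

lemma q_mem_Zq : q ∈ Zq := Subring.subset_closure rfl

lemma smul_C_eq (c : K) (x : Kz) :
    c • x = algebraMap (Polynomial K) Kz (Polynomial.C c) * x := by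
  rw [RatFunc.smul_eq_C_mul, ← RatFunc.algebraMap_eq_C,
    IsScalarTower.algebraMap_apply K (Polynomial K) Kz, Polynomial.algebraMap_eq]

lemma P_comb {x y : Kz} {s t : K} (hx : P x s) (hy : P y t) :
    P ((q - 1) • x + q • y) ((q - 1) * s + q * t) := by
  obtain ⟨p1, hp1, hx, he1⟩ := hx
  obtain ⟨p2, hp2, hy, he2⟩ := hy
  refine ⟨Polynomial.C (q - 1) * p1 + Polynomial.C q * p2, fun i => ?_, ?_, ?_⟩
  · rw [Polynomial.coeff_add, Polynomial.coeff_C_mul, Polynomial.coeff_C_mul]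
    exact Subring.add_mem _
      (Subring.mul_mem _ (Subring.sub_mem _ q_mem_Zq (Subring.one_mem _)) (hp1 i))
      (Subring.mul_mem _ q_mem_Zq (hp2 i))
  · rw [map_add, map_mul, map_mul, hx, hy, smul_C_eq, smul_C_eq]
  · rw [Polynomial.eval_add, Polynomial.eval_mul, Polynomial.eval_mul, Polynomial.eval_C,
      Polynomial.eval_C, he1, he2]

lemma P_mem_Rqz {x : Kz} {t : K} (hx : P x t) : x ∈ Rqz := by
  obtain ⟨p, hp, hx, _⟩ := hx
  have hZq : ∀ c : K, c ∈ Zq → algebraMap K Kz c ∈ Rqz := by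
    intro c hc
    have : (algebraMap K Kz c) ∈ Subring.map (algebraMap K Kz : K →+* Kz) Zq :=
      ⟨c, hc, rfl⟩
    rw [Zq, RingHom.map_closure] at this
    refine Subring.closure_mono ?_ this
    rintro x ⟨y, hy, rfl⟩
    rw [Set.mem_singleton_iff] at hy
    rw [hy]; exact Or.inl rfl
  rw [hx, Polynomial.as_sum_support_C_mul_X_pow p, map_sum]
  refine Subring.sum_mem _ (fun i _ => ?_)
  rw [map_mul, map_pow]
  refine Subring.mul_mem _ ?_ (Subring.pow_mem _ ?_ i)
  · rw [← Polynomial.algebraMap_eq, ← IsScalarTower.algebraMap_apply K (Polynomial K) Kz]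
    exact hZq _ (hp i)
  · rw [RatFunc.algebraMap_X]
    exact Subring.subset_closure (Or.inr rfl)

lemma P_eval {x : Kz} {t : K} (hx : P x t) : evalz0 x = t := by
  obtain ⟨p, _, hx, he⟩ := hx
  rw [hx, evalz0, RatFunc.eval_algebraMap]
  simpa [Polynomial.eval] using he

/-- the descending word `[f (a-1), …, f 1, f 0]`. -/
def DL (a : ℕ) (f : ℕ → ℕ) : List ℕ := ((List.range a).reverse).map f

lemma DL_zero (f : ℕ → ℕ) : DL 0 f = [] := rfl

lemma DL_succ (a : ℕ) (f : ℕ → ℕ) : DL (a + 1) f = f a :: DL a f := by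
  unfold DL
  rw [List.range_succ, List.reverse_append, List.reverse_singleton, List.singleton_append,
    List.map_cons]

lemma mem_DL {a : ℕ} {f : ℕ → ℕ} {i : ℕ} (h : i ∈ DL a f) : ∃ j, j < a ∧ i = f j := by
  unfold DL at h
  obtain ⟨j, hj, rfl⟩ := List.mem_map.mp h
  exact ⟨j, List.mem_range.mp (List.mem_reverse.mp hj), rfl⟩

lemma DL_congr {a : ℕ} {f g : ℕ → ℕ} (h : ∀ j, j < a → f j = g j) : DL a f = DL a g := by
  unfold DL
  exact List.map_congr_left (fun j hj => h j (List.mem_range.mp (List.mem_reverse.mp hj)))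

lemma mono_ge {a : ℕ} {f : ℕ → ℕ} (h : ∀ i j, i < j → j < a → f i < f j) :
    ∀ j, j < a → j ≤ f j := by
  intro j
  induction j with
  | zero => intro _; exact Nat.zero_le _
  | succ j ih =>
    intro hj
    have h1 := h j (j + 1) (Nat.lt_succ_self j) hj
    have h2 := ih (by omega)
    omega

lemma main (hT : IsMarkovB T) (hnorm : T 0 1 = 1) :
    ∀ N a b n : ℕ, ∀ f : ℕ → ℕ, a + b ≤ N →
      (∀ i j, i < j → j < a → f i < f j) →
      (∀ j, j < a → f j < n) → b ≤ n →
      P (Tr T n (DL a f ++ List.range b))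
        (if a = b ∧ ∀ j < a, f j = j then q ^ a else 0) := by
  intro N
  induction N with
  | zero =>
    intro a b n f hab _ _ _
    have ha : a = 0 := by omega
    have hb : b = 0 := by omega
    subst ha; subst hb
    rw [DL_zero, List.range_zero, List.nil_append, Tr_nil hT hnorm,
      if_pos ⟨rfl, fun j hj => absurd hj (Nat.not_lt_zero j)⟩, pow_zero]
    exact P_one
  | succ N IH =>
    intro a b n f hab hmono hfn hbn
    match a, b with
    | 0, 0 =>
      rw [DL_zero, List.range_zero, List.nil_append, Tr_nil hT hnorm,
        if_pos ⟨rfl, fun j hj => absurd hj (Nat.not_lt_zero j)⟩, pow_zero]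
      exact P_one
    | 0, b' + 1 =>
      rw [DL_zero, List.nil_append, List.range_succ]
      have hmem : ∀ i ∈ List.range b', i < b' := fun i hi => List.mem_range.mp hi
      have hstab : Tr T n (List.range b' ++ [b']) = Tr T (b' + 1) (List.range b' ++ [b']) :=
        Tr_stab hT hbn (by
          intro i hi
          rcases List.mem_append.mp hi with h | h
          · have := hmem i h; omega
          · simp at h; omega)
      rw [hstab, Tr_markov hT hmem, if_neg (by rintro ⟨h, -⟩; omega)]
      have := IH 0 b' b' f (by omega) (by intro i j _ hj; omega)
        (by intro j hj; omega) le_rfl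
      rw [DL_zero, List.nil_append] at this
      exact P_z_mul this
    | a' + 1, b =>
      set M := f a' with hM
      rcases le_or_gt b M with hMb | hMb
      · -- case (i): M ≥ b, pull off σ_M at the front
        rw [DL_succ]
        have hcyc : Tr T n ((f a' :: DL a' f) ++ List.range b)
            = Tr T n ((DL a' f ++ List.range b) ++ [M]) := by
          have : (f a' :: DL a' f) ++ List.range b = [M] ++ (DL a' f ++ List.range b) := by
            simp [hM]
          rw [this, Tr_cyc hT]
        have hbound : ∀ i ∈ DL a' f ++ List.range b, i < M := by
          intro i hi
          rcases List.mem_append.mp hi with h | h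
          · obtain ⟨j, hj, rfl⟩ := mem_DL h
            exact hmono j a' hj (Nat.lt_succ_self a')
          · have := List.mem_range.mp h; omega
        have hMn : M < n := hfn a' (Nat.lt_succ_self a')
        rw [hcyc, Tr_stab hT (show M + 1 ≤ n by omega)
            (by intro i hi
                rcases List.mem_append.mp hi with h | h
                · have := hbound i h; omega
                · simp at h; omega),
          Tr_markov hT hbound,
          if_neg (by
            rintro ⟨h1, h2⟩
            have := h2 a' (Nat.lt_succ_self a')
            omega)]
        exact P_z_mul (IH a' b M f (by omega)
          (fun i j hij hj => hmono i j hij (by omega))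
          (fun j hj => hbound (f j) (List.mem_append.mpr (Or.inl
            (by unfold DL
                exact List.mem_map.mpr ⟨j, List.mem_reverse.mpr (List.mem_range.mpr hj), rfl⟩))))
          hMb)
      · -- M < b, so b = b'' + 1
        obtain ⟨b'', rfl⟩ : ∃ b'', b = b'' + 1 := ⟨b - 1, by omega⟩
        rcases eq_or_lt_of_le (show M ≤ b'' by omega) with hMk | hMk
        · -- case (iii): M = b''
          have hkn : b'' < n := by omega
          have hbound : ∀ i ∈ DL a' f ++ List.range b'', i < b'' + 1 := by
            intro i hi
            rcases List.mem_append.mp hi with h | h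
            · obtain ⟨j, hj, rfl⟩ := mem_DL h
              have := hmono j a' hj (Nat.lt_succ_self a'); omega
            · have := List.mem_range.mp h; omega
          have hcyc : Tr T n (DL (a' + 1) f ++ List.range (b'' + 1))
              = Tr T n ((DL a' f ++ List.range b'') ++ [b'', b'']) := by
            rw [DL_succ, List.range_succ]
            have e1 : (f a' :: DL a' f) ++ (List.range b'' ++ [b''])
                = [b''] ++ (DL a' f ++ (List.range b'' ++ [b''])) := by
              simp [hM, ← hMk]
            rw [e1, Tr_cyc hT]
            congr 1
            simp
          rw [hcyc, Tr_hecke hT _ hkn]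
          have e2 : (DL a' f ++ List.range b'') ++ [b''] = DL a' f ++ List.range (b'' + 1) := by
            rw [List.range_succ, List.append_assoc]
          rw [e2]
          have IH1 := IH a' (b'' + 1) n f (by omega)
            (fun i j hij hj => hmono i j hij (by omega))
            (fun j hj => hfn j (by omega)) hbn
          have IH2 := IH a' b'' n f (by omega)
            (fun i j hij hj => hmono i j hij (by omega))
            (fun j hj => hfn j (by omega)) (by omega)
          have hge : a' ≤ f a' := mono_ge hmono a' (Nat.lt_succ_self a')
          rw [if_neg (by rintro ⟨h1, -⟩; omega)] at IH1
          have key := P_comb IH1 IH2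
          rw [mul_zero, zero_add] at key
          by_cases hcond : a' = b'' ∧ ∀ j < a', f j = j
          · rw [if_pos hcond] at key
            rw [if_pos (show a' + 1 = b'' + 1 ∧ ∀ j < a' + 1, f j = j from
              ⟨by omega, fun j hj => by
                rcases Nat.lt_succ_iff_lt_or_eq.mp hj with h | h
                · exact hcond.2 j h
                · subst h; rw [← hM]; omega⟩)]
            rw [show q * q ^ a' = q ^ (a' + 1) by ring] at key
            exact key
          · rw [if_neg hcond] at key
            rw [if_neg (by
              rintro ⟨h1, h2⟩
              exact hcond ⟨by omega, fun j hj => h2 j (by omega)⟩)]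
            rw [mul_zero] at key
            exact key
        · -- case (ii): M < b''
          rw [List.range_succ, ← List.append_assoc]
          have hbound : ∀ i ∈ DL (a' + 1) f ++ List.range b'', i < b'' := by
            intro i hi
            rcases List.mem_append.mp hi with h | h
            · obtain ⟨j, hj, rfl⟩ := mem_DL h
              have : f j ≤ M := by
                rcases Nat.lt_succ_iff_lt_or_eq.mp hj with h | h
                · exact le_of_lt (hmono j a' h (Nat.lt_succ_self a'))
                · rw [h]
              omega
            · exact List.mem_range.mp h
          rw [Tr_stab hT (show b'' + 1 ≤ n by omega)
              (by intro i hi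
                  rcases List.mem_append.mp hi with h | h
                  · have := hbound i h; omega
                  · simp at h; omega),
            Tr_markov hT hbound,
            if_neg (by
              rintro ⟨h1, h2⟩
              have := h2 a' (Nat.lt_succ_self a')
              omega)]
          exact P_z_mul (IH (a' + 1) b'' b'' f (by omega) hmono
            (fun j hj => hbound (f j) (List.mem_append.mpr (Or.inl
              (by unfold DL
                  exact List.mem_map.mpr ⟨j, List.mem_reverse.mpr (List.mem_range.mpr hj), rfl⟩))))
            le_rfl)


lemma gp_map_val {n : ℕ} (L : List (Fin (n - 1))) :
    gp n (L.map Fin.val) = (L.map bgen).prod := by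
  induction L with
  | nil => rfl
  | cons j L ih =>
    rw [List.map_cons, List.map_cons, gp_cons, List.prod_cons, ih, dif_pos j.isLt, Fin.eta]

lemma map_range_eq_ofFn {α : Type*} (a : ℕ) (f : ℕ → α) (g : Fin a → α)
    (h : ∀ j : Fin a, f (j : ℕ) = g j) : (List.range a).map f = List.ofFn g := by
  apply List.ext_getElem
  · simp
  · intro i h1 h2
    simp only [List.getElem_map, List.getElem_range, List.getElem_ofFn]
    exact h ⟨i, by simpa using h1⟩

end S19

/-- Let `n = m+1 ≥ 2`, `0 ≤ a, b ≤ n-1`, and `i_1 < i_2 < ⋯ < i_a` in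
`{1, …, n-1}`.  Set `γ = σ_{i_a} ⋯ σ_{i_2} σ_{i_1} σ_1 σ_2 ⋯ σ_b ∈ B_n⁺`.  Then `tr⁰_n(γ)`
lies in `ℤ[q, z]` and its evaluation at `z = 0` is `q^a` if `a = b` and `i_j = j` for all
`j`, and `0` otherwise. -/
theorem statement19 (T : TRBc) (hT : IsMarkovB T) (hnorm : T 0 1 = 1)
    (m : ℕ) (hm : 1 ≤ m) (a b : ℕ) (ha : a ≤ m) (hb : b ≤ m)
    (idx : Fin a → Fin ((m + 1) - 1)) (hidx : StrictMono idx) :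
    T m (ιHB ((List.ofFn fun j : Fin a => bgen (idx j)).reverse.prod *
          (List.ofFn fun j : Fin b => bgen (⟨(j : ℕ), by omega⟩ : Fin ((m + 1) - 1))).prod))
        ∈ Rqz ∧
    evalz0 (T m (ιHB ((List.ofFn fun j : Fin a => bgen (idx j)).reverse.prod *
          (List.ofFn fun j : Fin b => bgen (⟨(j : ℕ), by omega⟩ : Fin ((m + 1) - 1))).prod)))
      = if a = b ∧ ∀ j : Fin a, (idx j : ℕ) = (j : ℕ) then q ^ a else 0 := by
    classical
  set f : ℕ → ℕ := fun j => if h : j < a then ((idx ⟨j, h⟩ : ℕ)) else m + j with hf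
  have hfval : ∀ (j : ℕ) (hj : j < a), f j = (idx ⟨j, hj⟩ : ℕ) := by
    intro j hj; simp only [hf]; rw [dif_pos hj]
  have hword : S19.gp (m + 1) (S19.DL a f ++ List.range b)
      = (List.ofFn fun j : Fin a => bgen (idx j)).reverse.prod *
        (List.ofFn fun j : Fin b => bgen (⟨(j : ℕ), by omega⟩ : Fin ((m + 1) - 1))).prod := by
    rw [S19.gp_append]
    congr 1
    · have e1 : S19.DL a f = ((List.ofFn idx).reverse).map Fin.val := by
        unfold S19.DL
        rw [List.map_reverse, List.map_reverse]
        congr 1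
        rw [List.map_ofFn]
        exact S19.map_range_eq_ofFn a f _ (fun j => by
          rw [hfval j j.isLt]; rfl)
      rw [e1, S19.gp_map_val, List.map_reverse, List.map_ofFn]
      rfl
    · have e2 : List.range b
          = ((List.ofFn fun j : Fin b => (⟨(j : ℕ), by omega⟩ : Fin ((m + 1) - 1)))).map
              Fin.val := by
        rw [List.map_ofFn]
        refine Eq.trans (List.map_id (List.range b)).symm
          (S19.map_range_eq_ofFn b id _ (fun j => rfl))
      rw [e2, S19.gp_map_val, List.map_ofFn]
      rfl
  have hmono' : ∀ i j : ℕ, i < j → j < a → f i < f j := by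
    intro i j hij hj
    rw [hfval i (by omega), hfval j hj]
    exact hidx (show (⟨i, by omega⟩ : Fin a) < ⟨j, hj⟩ from hij)
  have hfn' : ∀ j : ℕ, j < a → f j < m := by
    intro j hj
    rw [hfval j hj]
    exact (idx ⟨j, hj⟩).isLt
  have hmain := S19.main hT hnorm (a + b) a b m f le_rfl hmono' hfn' hb
  have hcond : (a = b ∧ ∀ j < a, f j = j) ↔ (a = b ∧ ∀ j : Fin a, (idx j : ℕ) = (j : ℕ)) := by
    constructor
    · rintro ⟨h1, h2⟩
      refine ⟨h1, fun j => ?_⟩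
      have := h2 (j : ℕ) j.isLt
      rwa [hfval (j : ℕ) j.isLt, Fin.eta] at this
    · rintro ⟨h1, h2⟩
      refine ⟨h1, fun j hj => ?_⟩
      rw [hfval j hj]
      exact h2 ⟨j, hj⟩
  constructor
  · rw [← hword]
    exact S19.P_mem_Rqz hmain
  · rw [← hword]
    have := S19.P_eval hmain
    rw [show (T m) (ιHB (S19.gp (m+1) (S19.DL a f ++ List.range b)))
        = S19.Tr T m (S19.DL a f ++ List.range b) from rfl]
    rw [this, if_congr hcond rfl rfl]
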